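/- arXiv:2503.20457 — 2 statements merged into one kernel-verified Lean document; each statement's English description precedes it below -/
import Mathlib

section
/- Under the hypotheses of the preceding statement and additionally div(ρF) = 0 (μ-a.e.), each U(t) is a linear isometry on L²(P), the probability measure P is invariant under the flow φ_t for every t ∈ ℝ (P = P∘φ_t⁻¹), and U(t)x = x∘φ_t for all x ∈ L²(P) and t ∈ ℝ. -/
open MeasureTheory Filter Topology

noncomputable section

/-- The probability measure dP = ρ dμ on ℝⁿ. -/
def Pmeas {n : ℕ} (ρ : EuclideanSpace ℝ (Fin n) → ℝ) : Measure (EuclideanSpace ℝ (Fin n)) :=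
  volume.withDensity fun x => ENNReal.ofReal (ρ x)

/-- A strongly continuous group of bounded operators on a real Banach space. -/
def IsC0GroupR {E : Type*} [NormedAddCommGroup E] [NormedSpace ℝ E]
    (G : ℝ → E →L[ℝ] E) : Prop :=
  G 0 = 1 ∧ (∀ s t : ℝ, G (s + t) = (G s).comp (G t)) ∧ ∀ x : E, Continuous fun t => G t x

/-- `A` is the generator of the strongly continuous group `U`. -/
def IsGeneratorR {E : Type*} [NormedAddCommGroup E] [NormedSpace ℝ E]
    (U : ℝ → E →L[ℝ] E) (A : E →ₗ.[ℝ] E) : Prop :=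
  ∀ x y : E, (∃ hx : x ∈ A.domain, A ⟨x, hx⟩ = y) ↔
    Tendsto (fun h : ℝ => h⁻¹ • (U h x - x)) (𝓝[≠] 0) (𝓝 y)

section Aux

open Metric Set Function
open scoped Manifold Convolution ENNReal NNReal

/-- Smooth Urysohn lemma with compact support on Euclidean space. -/
lemma aux_urysohn {n : ℕ} {K U : Set (EuclideanSpace ℝ (Fin n))} (hK : IsCompact K)
    (hU : IsOpen U) (hKU : K ⊆ U) :
    ∃ g : EuclideanSpace ℝ (Fin n) → ℝ, ContDiff ℝ 1 g ∧ HasCompactSupport g ∧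
      (∀ x, g x ∈ Set.Icc (0:ℝ) 1) ∧ (∀ x ∈ K, g x = 1) ∧ (∀ x ∉ U, g x = 0) := by
  obtain ⟨R, hR⟩ : ∃ R : ℝ, K ⊆ ball 0 R := by
    rcases hK.isBounded.subset_closedBall 0 with ⟨R, hR⟩
    exact ⟨R + 1, hR.trans (closedBall_subset_ball (by linarith))⟩
  set s : Set (EuclideanSpace ℝ (Fin n)) := Uᶜ ∪ (ball (0:EuclideanSpace ℝ (Fin n)) R)ᶜ
  have hs : IsClosed s := (hU.isClosed_compl).union (isOpen_ball.isClosed_compl)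
  have hd : Disjoint s K := by
    rw [Set.disjoint_left]
    rintro x (hx | hx) hxK
    · exact hx (hKU hxK)
    · exact hx (hR hxK)
  obtain ⟨f, hf0, hf1, hf01⟩ :=
    exists_contMDiffMap_zero_one_of_isClosed (𝓘(ℝ, EuclideanSpace ℝ (Fin n))) (n := ⊤) hs hK.isClosed hd
  have hsmooth : ContDiff ℝ (⊤ : ℕ∞) f := contMDiff_iff_contDiff.mp f.contMDiff
  refine ⟨f, hsmooth.of_le (by exact_mod_cast le_top), ?_, hf01, fun x hx => hf1 hx,
    fun x hx => hf0 (Or.inl hx)⟩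
  apply HasCompactSupport.intro (isCompact_closedBall (0:EuclideanSpace ℝ (Fin n)) R)
  intro x hx
  exact hf0 (Or.inr fun h => hx (ball_subset_closedBall h))

/-- Mollification: uniform approximation of continuous compactly supported functions
by smooth compactly supported functions. -/
lemma aux_mollify {n : ℕ} {f : EuclideanSpace ℝ (Fin n) → ℝ} (hf : Continuous f)
    (hcf : HasCompactSupport f) {ε : ℝ} (hε : 0 < ε) :
    ∃ k : EuclideanSpace ℝ (Fin n) → ℝ, ContDiff ℝ 1 k ∧ HasCompactSupport k ∧
      ∀ x, ‖f x - k x‖ ≤ ε := by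
  have huc : UniformContinuous f := by
    apply hf.uniformContinuous_of_tendsto_cocompact (x := (0:ℝ))
    apply Tendsto.congr' _ tendsto_const_nhds
    filter_upwards [mem_cocompact.mpr ⟨tsupport f, hcf, Set.Subset.rfl⟩] with x hx
    exact (image_eq_zero_of_notMem_tsupport hx).symm
  obtain ⟨δ, hδ, hδ'⟩ := Metric.uniformContinuous_iff.mp huc ε hε
  set φb : ContDiffBump (0 : EuclideanSpace ℝ (Fin n)) :=
    ⟨δ/2, δ, by linarith, by linarith⟩
  set k : EuclideanSpace ℝ (Fin n) → ℝ :=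
    (φb.normed volume) ⋆[ContinuousLinearMap.lsmul ℝ ℝ, volume] f with hk
  have hks : ContDiff ℝ 1 k :=
    (HasCompactSupport.contDiff_convolution_left _ φb.hasCompactSupport_normed
      (φb.contDiff_normed (n := 1)) (hf.locallyIntegrable)).of_le le_rfl
  refine ⟨k, hks, φb.hasCompactSupport_normed.convolution _ hcf, fun x => ?_⟩
  have := φb.dist_normed_convolution_le (μ := volume) hf.aestronglyMeasurable
    (x₀ := x) (ε := ε) (fun y hy => (hδ' (mem_ball.mp hy)).le)
  rw [Real.norm_eq_abs, abs_sub_comm, ← Real.dist_eq]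
  exact this

/-- Density of (classes of) `C¹` compactly supported functions in `L²(P)`. -/
lemma aux_dense {n : ℕ} (ρ : EuclideanSpace ℝ (Fin n) → ℝ)
    (hP : IsProbabilityMeasure (Pmeas ρ)) (x : Lp ℝ 2 (Pmeas ρ)) {ε : ℝ} (hε : 0 < ε) :
    ∃ z : Lp ℝ 2 (Pmeas ρ),
      (∃ g : EuclideanSpace ℝ (Fin n) → ℝ, ContDiff ℝ 1 g ∧ HasCompactSupport g ∧
        (z : EuclideanSpace ℝ (Fin n) → ℝ) =ᵐ[Pmeas ρ] g) ∧ ‖x - z‖ ≤ ε := by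
  haveI := hP
  have hx : MemLp (x : EuclideanSpace ℝ (Fin n) → ℝ) 2 (Pmeas ρ) := Lp.memLp x
  have hε2 : (ENNReal.ofReal (ε/2)) ≠ 0 := by
    simp only [ne_eq, ENNReal.ofReal_eq_zero, not_le]; linarith
  obtain ⟨g₀, hg₀supp, hg₀close, hg₀cont, _⟩ :=
    hx.exists_hasCompactSupport_eLpNorm_sub_le (p := 2) (by norm_num) hε2
  obtain ⟨k, hk1, hkc, hkb⟩ := aux_mollify hg₀cont hg₀supp (half_pos hε)
  have hkmem : MemLp k 2 (Pmeas ρ) := hk1.continuous.memLp_of_hasCompactSupport hkc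
  refine ⟨hkmem.toLp k, ⟨k, hk1, hkc, hkmem.coeFn_toLp⟩, ?_⟩
  have h2 : eLpNorm (g₀ - k) 2 (Pmeas ρ) ≤ ENNReal.ofReal (ε/2) := by
    refine le_trans (eLpNorm_le_of_ae_bound (C := ε/2) (ae_of_all _ fun a => ?_)) ?_
    · exact hkb a
    · simp [measure_univ]
  have hcoe : (↑(x - hkmem.toLp k) : EuclideanSpace ℝ (Fin n) → ℝ)
      =ᵐ[Pmeas ρ] (x : EuclideanSpace ℝ (Fin n) → ℝ) - k := by
    filter_upwards [Lp.coeFn_sub x (hkmem.toLp k), hkmem.coeFn_toLp] with a h1 h2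
    rw [h1, Pi.sub_apply, h2]; rfl
  have htri : eLpNorm ((x : EuclideanSpace ℝ (Fin n) → ℝ) - k) 2 (Pmeas ρ)
      ≤ ENNReal.ofReal ε := by
    have hsplit : (x : EuclideanSpace ℝ (Fin n) → ℝ) - k
        = ((x : EuclideanSpace ℝ (Fin n) → ℝ) - g₀) + (g₀ - k) := by
      funext a; simp only [Pi.sub_apply, Pi.add_apply]; ring
    rw [hsplit]
    refine le_trans (eLpNorm_add_le ((Lp.aestronglyMeasurable x).sub
      hg₀cont.aestronglyMeasurable) (hg₀cont.aestronglyMeasurable.sub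
      hk1.continuous.aestronglyMeasurable) one_le_two) ?_
    calc eLpNorm ((x : EuclideanSpace ℝ (Fin n) → ℝ) - g₀) 2 (Pmeas ρ)
          + eLpNorm (g₀ - k) 2 (Pmeas ρ)
        ≤ ENNReal.ofReal (ε/2) + ENNReal.ofReal (ε/2) := add_le_add hg₀close h2
      _ = ENNReal.ofReal ε := by rw [← ENNReal.ofReal_add (by linarith) (by linarith)]; norm_num
  rw [Lp.norm_def]
  refine ENNReal.toReal_le_of_le_ofReal hε.le ?_
  calc eLpNorm (↑(x - hkmem.toLp k) : EuclideanSpace ℝ (Fin n) → ℝ) 2 (Pmeas ρ)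
      = eLpNorm ((x : EuclideanSpace ℝ (Fin n) → ℝ) - k) 2 (Pmeas ρ) := eLpNorm_congr_ae hcoe
    _ ≤ ENNReal.ofReal ε := htri


lemma aux_flow_cont {n : ℕ} {F : EuclideanSpace ℝ (Fin n) → EuclideanSpace ℝ (Fin n)}
    (hF : ContDiff ℝ 1 F) {C : ℝ} (hFb : ∀ x, ‖fderiv ℝ F x‖ ≤ C)
    {φf : ℝ → EuclideanSpace ℝ (Fin n) → EuclideanSpace ℝ (Fin n)}
    (hφ0 : φf 0 = id)
    (hφd : ∀ x t, HasDerivAt (fun s => φf s x) (F (φf t x)) t) :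
    ∀ t, Continuous (φf t) := by
  have hC0 : 0 ≤ C := (norm_nonneg _).trans (hFb 0)
  have hlip : LipschitzWith C.toNNReal F := by
    apply lipschitzWith_of_nnnorm_fderiv_le (hF.differentiable one_ne_zero)
    intro x
    rw [← NNReal.coe_le_coe, coe_nnnorm, Real.coe_toNNReal _ hC0]
    exact hFb x
  intro t
  have hcont : ∀ (z : EuclideanSpace ℝ (Fin n)), Continuous (fun s => φf s z) :=
    fun z => continuous_iff_continuousAt.mpr fun s => (hφd z s).continuousAt
  have key : ∀ x y, dist (φf t x) (φf t y) ≤ dist x y * Real.exp (C.toNNReal * |t|) := by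
    intro x y
    rcases le_or_gt 0 t with ht | ht
    · have h := dist_le_of_trajectories_ODE (v := fun _ => F) (K := C.toNNReal)
        (f := fun s => φf s x) (g := fun s => φf s y) (a := 0) (b := t) (δ := dist x y)
        (fun _ => hlip) (hcont x).continuousOn
        (fun s _ => (hφd x s).hasDerivWithinAt)
        (hcont y).continuousOn
        (fun s _ => (hφd y s).hasDerivWithinAt)
        (by simp [hφ0])
      have h2 := h t (Set.right_mem_Icc.mpr ht)
      simpa [abs_of_nonneg ht] using h2
    · have hd' : ∀ (z : EuclideanSpace ℝ (Fin n)) (s : ℝ),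
          HasDerivAt (fun r => φf (-r) z) (-F (φf (-s) z)) s := by
        intro z s
        have h1 : HasDerivAt (fun r : ℝ => -r) (-1) s := (hasDerivAt_id s).neg
        have h2 := (hφd z (-s)).scomp s h1
        simp at h2; exact h2
      have h := dist_le_of_trajectories_ODE (v := fun _ b => -F b) (K := C.toNNReal)
        (f := fun s => φf (-s) x) (g := fun s => φf (-s) y) (a := 0) (b := -t) (δ := dist x y)
        (fun _ => hlip.neg)
        (((hcont x).comp continuous_neg).continuousOn)
        (fun s _ => (hd' x s).hasDerivWithinAt)
        (((hcont y).comp continuous_neg).continuousOn)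
        (fun s _ => (hd' y s).hasDerivWithinAt)
        (by simp [hφ0])
      have h2 := h (-t) (Set.right_mem_Icc.mpr (by linarith))
      simpa [abs_of_neg ht] using h2
  have hlip' : LipschitzWith (Real.toNNReal (Real.exp (C.toNNReal * |t|))) (φf t) := by
    apply LipschitzWith.of_dist_le_mul
    intro x y
    rw [Real.coe_toNNReal _ (Real.exp_pos _).le, mul_comm]
    exact key x y
  exact hlip'.continuous

lemma aux_Pint {n : ℕ} (ρ : EuclideanSpace ℝ (Fin n) → ℝ) (hρ0 : ∀ x, 0 ≤ ρ x)
    (hρae : AEMeasurable ρ volume) (h : EuclideanSpace ℝ (Fin n) → ℝ) :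
    ∫ a, h a ∂(Pmeas ρ) = ∫ a, ρ a * h a ∂volume := by
  have hPeq : Pmeas ρ = volume.withDensity fun x => (((ρ x).toNNReal : ℝ≥0) : ℝ≥0∞) := rfl
  rw [hPeq, integral_withDensity_eq_integral_smul₀ (by
    exact measurable_real_toNNReal.comp_aemeasurable hρae)]
  apply integral_congr_ae
  filter_upwards with a
  rw [NNReal.smul_def, smul_eq_mul, Real.coe_toNNReal _ (hρ0 a)]

end Aux

set_option maxHeartbeats 2000000 in
/-- if additionally div(ρF) = 0, each U(t) is an isometry on L²(P),
the measure P is invariant under the flow, and U(t) is the Koopman operator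
x ↦ x∘φ_t on all of L²(P). -/
theorem koopman_group_unitary {n : ℕ}
    (ρ : EuclideanSpace ℝ (Fin n) → ℝ)
    (hρ0 : ∀ x, 0 ≤ ρ x) (hρi : Integrable ρ) (hρ1 : ∫ x, ρ x = 1)
    (F : EuclideanSpace ℝ (Fin n) → EuclideanSpace ℝ (Fin n))
    (hF : ContDiff ℝ 1 F) (C : ℝ) (hFb : ∀ x, ‖fderiv ℝ F x‖ ≤ C)
    (dvg : EuclideanSpace ℝ (Fin n) → ℝ) (hdvgi : Integrable dvg)
    (hdvg : ∀ φ : EuclideanSpace ℝ (Fin n) → ℝ, ContDiff ℝ 1 φ → HasCompactSupport φ →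
      ∫ x, ρ x * fderiv ℝ φ x (F x) = -∫ x, dvg x * φ x)
    -- div(ρF) = 0 μ-a.e.:
    (hdvg0 : dvg =ᵐ[volume] 0)
    (φf : ℝ → EuclideanSpace ℝ (Fin n) → EuclideanSpace ℝ (Fin n))
    (hφ0 : φf 0 = id) (hφg : ∀ s t : ℝ, φf (s + t) = φf s ∘ φf t)
    (hφd : ∀ x t, HasDerivAt (fun s => φf s x) (F (φf t x)) t)
    (Aop : Lp ℝ 2 (Pmeas ρ) →ₗ.[ℝ] Lp ℝ 2 (Pmeas ρ))
    (hAop : ∀ x y : Lp ℝ 2 (Pmeas ρ), (∃ hx : x ∈ Aop.domain, Aop ⟨x, hx⟩ = y) ↔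
      ∃ g : EuclideanSpace ℝ (Fin n) → ℝ, ContDiff ℝ 1 g ∧ HasCompactSupport g ∧
        (x : EuclideanSpace ℝ (Fin n) → ℝ) =ᵐ[Pmeas ρ] g ∧
        (y : EuclideanSpace ℝ (Fin n) → ℝ) =ᵐ[Pmeas ρ] fun a => fderiv ℝ g a (F a))
    -- U is the strongly continuous group generated by the closure of (F·∇, C¹_c):
    (U : ℝ → Lp ℝ 2 (Pmeas ρ) →L[ℝ] Lp ℝ 2 (Pmeas ρ))
    (hU : IsC0GroupR U) (hUgen : IsGeneratorR U Aop.closure)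
    (hUK : ∀ (x : Lp ℝ 2 (Pmeas ρ)) (g : EuclideanSpace ℝ (Fin n) → ℝ),
        ContDiff ℝ 1 g → HasCompactSupport g →
        (x : EuclideanSpace ℝ (Fin n) → ℝ) =ᵐ[Pmeas ρ] g →
        ∀ t : ℝ, (U t x : EuclideanSpace ℝ (Fin n) → ℝ) =ᵐ[Pmeas ρ] fun a => g (φf t a)) :
    (∀ (t : ℝ) (x : Lp ℝ 2 (Pmeas ρ)), ‖U t x‖ = ‖x‖) ∧
    (∀ t : ℝ, (Pmeas ρ).map (φf t) = Pmeas ρ) ∧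
    (∀ (t : ℝ) (x : Lp ℝ 2 (Pmeas ρ)),
      (U t x : EuclideanSpace ℝ (Fin n) → ℝ) =ᵐ[Pmeas ρ]
        fun a => (x : EuclideanSpace ℝ (Fin n) → ℝ) (φf t a)) := by
  obtain ⟨hU0, hUadd, hUcont⟩ := hU
  have hρae : AEMeasurable ρ volume := hρi.aemeasurable
  -- P is a probability measure
  haveI hPprob : IsProbabilityMeasure (Pmeas ρ) := by
    constructor
    have h1 : (Pmeas ρ) Set.univ = ∫⁻ x, ENNReal.ofReal (ρ x) ∂volume := by
      rw [Pmeas, withDensity_apply _ MeasurableSet.univ, Measure.restrict_univ]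
    rw [h1, ← ofReal_integral_eq_lintegral_ofReal hρi (ae_of_all _ hρ0), hρ1,
      ENNReal.ofReal_one]
  -- the flow is continuous for each time
  have hφcont : ∀ t, Continuous (φf t) := aux_flow_cont hF hFb hφ0 hφd
  have hφmeas : ∀ t, Measurable (φf t) := fun t => (hφcont t).measurable
  -- integral against P as weighted Lebesgue integral
  have hPint : ∀ h : EuclideanSpace ℝ (Fin n) → ℝ,
      ∫ a, h a ∂(Pmeas ρ) = ∫ a, ρ a * h a ∂volume := fun h => aux_Pint ρ hρ0 hρae h
  -- the constant function 1 in L²(P)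
  set one : Lp ℝ 2 (Pmeas ρ) := (memLp_const (1:ℝ)).toLp (fun _ => (1:ℝ)) with hone_def
  have hone : (one : EuclideanSpace ℝ (Fin n) → ℝ) =ᵐ[Pmeas ρ] fun _ => (1:ℝ) :=
    MemLp.coeFn_toLp _
  -- the linear functional ⟨A·, 1⟩ vanishes on the graph of Aop
  have hvanish : ∀ p : (Lp ℝ 2 (Pmeas ρ)) × (Lp ℝ 2 (Pmeas ρ)), p ∈ Aop.graph →
      (inner ℝ p.2 one : ℝ) = 0 := by
    rintro ⟨x, y⟩ hp
    rw [LinearPMap.mem_graph_iff] at hp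
    obtain ⟨v, hv1, hv2⟩ := hp
    have hv1' : (v : Lp ℝ 2 (Pmeas ρ)) = x := hv1
    have hv2' : Aop v = y := hv2
    have hxd : x ∈ Aop.domain := hv1' ▸ v.2
    have hval : Aop ⟨x, hxd⟩ = y := by
      rw [← hv2']; congr 1; exact Subtype.ext hv1'.symm
    obtain ⟨g, hg1, hgc, hxg, hyg⟩ := (hAop x y).mp ⟨hxd, hval⟩
    rw [MeasureTheory.L2.inner_def]
    have h1 : ∫ a, (inner ℝ ((y : EuclideanSpace ℝ (Fin n) → ℝ) a)
          ((one : EuclideanSpace ℝ (Fin n) → ℝ) a) : ℝ) ∂(Pmeas ρ)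
        = ∫ a, fderiv ℝ g a (F a) ∂(Pmeas ρ) := by
      apply integral_congr_ae
      filter_upwards [hyg, hone] with a ha hb
      rw [ha, hb]
      simp [RCLike.inner_apply]
    rw [h1, hPint, hdvg g hg1 hgc]
    have h0 : ∫ x, dvg x * g x = 0 := by
      rw [← integral_zero (EuclideanSpace ℝ (Fin n)) ℝ (μ := volume)]
      apply integral_congr_ae
      filter_upwards [hdvg0] with a ha
      rw [ha]
      simp
    rw [h0, neg_zero]
  -- and hence on the graph of the closure
  have hvanish' : ∀ (w : Lp ℝ 2 (Pmeas ρ)) (hw : w ∈ Aop.closure.domain),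
      (inner ℝ (Aop.closure ⟨w, hw⟩) one : ℝ) = 0 := by
    intro w hw
    have hgraphsub : ∀ p : (Lp ℝ 2 (Pmeas ρ)) × (Lp ℝ 2 (Pmeas ρ)), p ∈ Aop.closure.graph →
        p ∈ closure (Aop.graph : Set ((Lp ℝ 2 (Pmeas ρ)) × (Lp ℝ 2 (Pmeas ρ)))) := by
      intro p hp
      by_cases hc : Aop.IsClosable
      · rw [← hc.graph_closure_eq_closure_graph] at hp
        exact hp
      · rw [Aop.closure_def' hc] at hp
        exact subset_closure hp
    have hmem : ((w : Lp ℝ 2 (Pmeas ρ)), Aop.closure ⟨w, hw⟩)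
        ∈ closure (Aop.graph : Set _) := hgraphsub _ (Aop.closure.mem_graph ⟨w, hw⟩)
    have hcl : IsClosed {q : (Lp ℝ 2 (Pmeas ρ)) × (Lp ℝ 2 (Pmeas ρ)) |
        (inner ℝ q.2 one : ℝ) = 0} :=
      isClosed_eq (Continuous.inner continuous_snd continuous_const) continuous_const
    exact hcl.closure_subset_iff.mpr (fun q hq => hvanish q hq) hmem
  -- the function t ↦ ⟨U t z, 1⟩ is constant for z in the domain of the closure
  have hconst : ∀ (z : Lp ℝ 2 (Pmeas ρ)) (hz : z ∈ Aop.closure.domain) (t : ℝ),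
      (inner ℝ (U t z) one : ℝ) = (inner ℝ z one : ℝ) := by
    intro z hz t
    set w := Aop.closure ⟨z, hz⟩ with hw
    have htend : Tendsto (fun h : ℝ => h⁻¹ • (U h z - z)) (𝓝[≠] 0) (𝓝 w) :=
      (hUgen z w).mp ⟨hz, rfl⟩
    have hcomm : ∀ s h : ℝ, U h (U s z) = U s (U h z) := by
      intro s h
      have e1 : U (h + s) z = U h (U s z) := by rw [hUadd h s]; rfl
      have e2 : U (s + h) z = U s (U h z) := by rw [hUadd s h]; rfl
      rw [← e1, ← e2, add_comm]
    have domfact : ∀ s : ℝ, ∃ hd : U s z ∈ Aop.closure.domain,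
        Aop.closure ⟨U s z, hd⟩ = U s w := by
      intro s
      apply (hUgen (U s z) (U s w)).mpr
      have heq : (fun h : ℝ => h⁻¹ • (U h (U s z) - U s z))
          = fun h : ℝ => U s (h⁻¹ • (U h z - z)) := by
        funext h
        rw [hcomm s h, ← (U s).map_sub, ← (U s).map_smul]
      rw [heq]
      exact ((U s).continuous.tendsto w).comp htend
    have hderiv : ∀ s : ℝ, HasDerivAt (fun r => (inner ℝ (U r z) one : ℝ)) 0 s := by
      intro s
      have hD : HasDerivAt (fun r => U r z) (U s w) s := by
        rw [hasDerivAt_iff_tendsto_slope]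
        have hsub : Tendsto (fun r : ℝ => r - s) (𝓝[≠] s) (𝓝[≠] (0:ℝ)) := by
          apply tendsto_nhdsWithin_of_tendsto_nhds_of_eventually_within
          · have : Tendsto (fun r : ℝ => r - s) (𝓝 s) (𝓝 (s - s)) :=
              (continuous_id.sub continuous_const).tendsto s
            rw [sub_self] at this
            exact this.mono_left nhdsWithin_le_nhds
          · filter_upwards [self_mem_nhdsWithin] with r hr
            exact sub_ne_zero.mpr hr
        have hslope : slope (fun r => U r z) s
            = fun r => U s ((r - s)⁻¹ • (U (r - s) z - z)) := by
          funext r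
          rw [slope_def_module]
          have : U r z = U s (U (r - s) z) := by
            have := hUadd s (r - s)
            have h2 : s + (r - s) = r := by ring
            rw [h2] at this
            rw [this]; rfl
          rw [this, ← (U s).map_sub, ← (U s).map_smul]
        rw [hslope]
        exact ((U s).continuous.tendsto w).comp (htend.comp hsub)
      have hI := hD.inner ℝ (hasDerivAt_const s one)
      obtain ⟨hd, hdeq⟩ := domfact s
      have hz0 : (inner ℝ (U s w) one : ℝ) = 0 := by
        rw [← hdeq]; exact hvanish' (U s z) hd
      simpa [hz0] using hI
    have hdiff : Differentiable ℝ (fun r => (inner ℝ (U r z) one : ℝ)) :=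
      fun s => (hderiv s).differentiableAt
    have hcc := is_const_of_deriv_eq_zero hdiff (fun s => (hderiv s).deriv) t 0
    simpa [hU0] using hcc
  -- key integral identity
  have keyA : ∀ g : EuclideanSpace ℝ (Fin n) → ℝ, ContDiff ℝ 1 g → HasCompactSupport g →
      ∀ t : ℝ, ∫ a, g (φf t a) ∂(Pmeas ρ) = ∫ a, g a ∂(Pmeas ρ) := by
    intro g hg1 hgc t
    have hgm : MemLp g 2 (Pmeas ρ) := hg1.continuous.memLp_of_hasCompactSupport hgc
    set xg := hgm.toLp g with hxg_def
    set Hg : EuclideanSpace ℝ (Fin n) → ℝ := fun a => fderiv ℝ g a (F a) with hHg_def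
    have hHgc : Continuous Hg := (hg1.continuous_fderiv one_ne_zero).clm_apply hF.continuous
    have hHgs : HasCompactSupport Hg := by
      apply (hgc.fderiv (𝕜 := ℝ)).mono'
      intro a ha
      apply subset_tsupport
      simp only [Function.mem_support, ne_eq] at ha ⊢
      intro hfa
      apply ha
      show fderiv ℝ g a (F a) = 0
      rw [hfa]
      rfl
    have hHm : MemLp Hg 2 (Pmeas ρ) := hHgc.memLp_of_hasCompactSupport hHgs
    set yg := hHm.toLp Hg with hyg_def
    have hdom : ∃ hx : xg ∈ Aop.domain, Aop ⟨xg, hx⟩ = yg :=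
      (hAop xg yg).mpr ⟨g, hg1, hgc, hgm.coeFn_toLp, hHm.coeFn_toLp⟩
    obtain ⟨hxd, _⟩ := hdom
    have hzd : xg ∈ Aop.closure.domain := Aop.le_closure.1 hxd
    have h := hconst xg hzd t
    rw [MeasureTheory.L2.inner_def, MeasureTheory.L2.inner_def] at h
    have hK := hUK xg g hg1 hgc hgm.coeFn_toLp t
    have hlhs : ∫ a, (inner ℝ ((U t xg : EuclideanSpace ℝ (Fin n) → ℝ) a)
          ((one : EuclideanSpace ℝ (Fin n) → ℝ) a) : ℝ) ∂(Pmeas ρ)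
        = ∫ a, g (φf t a) ∂(Pmeas ρ) := by
      apply integral_congr_ae
      filter_upwards [hK, hone] with a ha hb
      rw [ha, hb]
      simp [RCLike.inner_apply]
    have hrhs : ∫ a, (inner ℝ ((xg : EuclideanSpace ℝ (Fin n) → ℝ) a)
          ((one : EuclideanSpace ℝ (Fin n) → ℝ) a) : ℝ) ∂(Pmeas ρ)
        = ∫ a, g a ∂(Pmeas ρ) := by
      apply integral_congr_ae
      filter_upwards [hgm.coeFn_toLp, hone] with a ha hb
      rw [ha, hb]
      simp [RCLike.inner_apply]
    rw [hlhs, hrhs] at h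
    exact h
  -- invariance of the measure
  have claimB : ∀ t : ℝ, (Pmeas ρ).map (φf t) = Pmeas ρ := by
    intro t
    have hφa : AEMeasurable (φf t) (Pmeas ρ) := (hφmeas t).aemeasurable
    set ν := (Pmeas ρ).map (φf t) with hν
    haveI hνp : IsProbabilityMeasure ν := Measure.isProbabilityMeasure_map hφa
    have hint : ∀ g : EuclideanSpace ℝ (Fin n) → ℝ, ContDiff ℝ 1 g → HasCompactSupport g →
        ∫ a, g a ∂ν = ∫ a, g a ∂(Pmeas ρ) := by
      intro g hg1 hgc
      rw [hν, integral_map hφa hg1.continuous.aestronglyMeasurable]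
      exact keyA g hg1 hgc t
    have hopen : ∀ Uo : Set (EuclideanSpace ℝ (Fin n)), IsOpen Uo → ν Uo = (Pmeas ρ) Uo := by
      intro Uo hUo
      set Km : ℕ → Set (EuclideanSpace ℝ (Fin n)) :=
        fun m => Metric.closedBall 0 m \ Metric.thickening (1/(m+1)) Uoᶜ with hKm
      have hKcomp : ∀ m, IsCompact (Km m) :=
        fun m => (isCompact_closedBall _ _).diff Metric.isOpen_thickening
      have hKU : ∀ m, Km m ⊆ Uo := by
        intro m x hx
        by_contra hxU
        exact hx.2 (Metric.self_subset_thickening (by positivity) Uoᶜ hxU)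
      have hmono : Monotone Km := by
        intro a b hab
        apply Set.diff_subset_diff
          (Metric.closedBall_subset_closedBall (by exact_mod_cast hab))
        apply Metric.thickening_mono
        apply one_div_le_one_div_of_le (by positivity)
        have : (a : ℝ) ≤ b := by exact_mod_cast hab
        linarith
      have hunion : ⋃ m, Km m = Uo := by
        apply subset_antisymm (Set.iUnion_subset fun m => hKU m)
        intro x hx
        obtain ⟨ε, hε, hball⟩ := Metric.isOpen_iff.mp hUo x hx
        obtain ⟨m₁, hm₁⟩ := exists_nat_ge ‖x‖
        obtain ⟨m₂, hm₂⟩ := exists_nat_one_div_lt hε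
        refine Set.mem_iUnion.mpr ⟨max m₁ m₂, ⟨?_, ?_⟩⟩
        · simp only [Metric.mem_closedBall, dist_zero_right]
          exact hm₁.trans (by exact_mod_cast le_max_left m₁ m₂)
        · intro hth
          obtain ⟨y, hy1, hy2⟩ := Metric.mem_thickening_iff.mp hth
          apply hy1
          apply hball
          rw [Metric.mem_ball, dist_comm]
          have h1 : (1 : ℝ)/((max m₁ m₂ : ℕ) + 1) ≤ 1/(m₂ + 1) := by
            apply one_div_le_one_div_of_le (by positivity)
            have : (m₂ : ℝ) ≤ (max m₁ m₂ : ℕ) := by exact_mod_cast le_max_right m₁ m₂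
            linarith
          calc dist x y < 1/((max m₁ m₂ : ℕ) + 1) := hy2
            _ ≤ 1/(m₂ + 1) := h1
            _ < ε := hm₂
      have hcomp : ∀ m, ν (Km m) ≤ (Pmeas ρ) Uo ∧ (Pmeas ρ) (Km m) ≤ ν Uo := by
        intro m
        obtain ⟨g, hg1, hgc, hg01, hgK, hgU⟩ := aux_urysohn (hKcomp m) hUo (hKU m)
        have hKmeas : MeasurableSet (Km m) := (hKcomp m).isClosed.measurableSet
        have key2 : ∀ (μ1 μ2 : Measure (EuclideanSpace ℝ (Fin n))),
            IsProbabilityMeasure μ1 → IsProbabilityMeasure μ2 →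
            (∫ a, g a ∂μ1 = ∫ a, g a ∂μ2) → μ1 (Km m) ≤ μ2 Uo := by
          intro μ1 μ2 h1 h2 heq
          haveI := h1; haveI := h2
          have hgi1 : Integrable g μ1 := hg1.continuous.integrable_of_hasCompactSupport hgc
          have hgi2 : Integrable g μ2 := hg1.continuous.integrable_of_hasCompactSupport hgc
          have hlow : (μ1 (Km m)).toReal ≤ ∫ a, g a ∂μ1 := by
            rw [← measureReal_def, ← integral_indicator_one hKmeas]
            apply integral_mono ((integrable_const (1:ℝ)).indicator hKmeas) hgi1
            intro a
            by_cases ha : a ∈ Km m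
            · simp [Set.indicator_of_mem ha, hgK a ha]
            · simp [Set.indicator_of_notMem ha, (hg01 a).1]
          have hhigh : ∫ a, g a ∂μ2 ≤ (μ2 Uo).toReal := by
            rw [← measureReal_def, ← integral_indicator_one hUo.measurableSet]
            apply integral_mono hgi2 ((integrable_const (1:ℝ)).indicator hUo.measurableSet)
            intro a
            by_cases ha : a ∈ Uo
            · simp [Set.indicator_of_mem ha, (hg01 a).2]
            · simp [Set.indicator_of_notMem ha, hgU a ha]
          have hfin := hlow.trans (heq.le.trans hhigh)
          exact (ENNReal.toReal_le_toReal (measure_ne_top μ1 _) (measure_ne_top μ2 _)).mp hfin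
        exact ⟨key2 ν (Pmeas ρ) hνp hPprob (hint g hg1 hgc),
               key2 (Pmeas ρ) ν hPprob hνp (hint g hg1 hgc).symm⟩
      have hν1 : ν Uo ≤ (Pmeas ρ) Uo := by
        have ht := tendsto_measure_iUnion_atTop (μ := ν) hmono
        rw [hunion] at ht
        exact le_of_tendsto ht (Filter.Eventually.of_forall fun m => (hcomp m).1)
      have hν2 : (Pmeas ρ) Uo ≤ ν Uo := by
        have ht := tendsto_measure_iUnion_atTop (μ := Pmeas ρ) hmono
        rw [hunion] at ht
        exact le_of_tendsto ht (Filter.Eventually.of_forall fun m => (hcomp m).2)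
      exact le_antisymm hν1 hν2
    refine Measure.ext fun s hs => ?_
    rw [Set.measure_eq_iInf_isOpen s ν, Set.measure_eq_iInf_isOpen s (Pmeas ρ)]
    exact iInf_congr fun Uo => iInf_congr fun _ => iInf_congr fun hUo => hopen Uo hUo
  have hMP : ∀ t, MeasurePreserving (φf t) (Pmeas ρ) (Pmeas ρ) :=
    fun t => ⟨hφmeas t, claimB t⟩
  -- the Koopman identity on all of L²(P)
  have claim3 : ∀ (t : ℝ) (x : Lp ℝ 2 (Pmeas ρ)),
      (U t x : EuclideanSpace ℝ (Fin n) → ℝ) =ᵐ[Pmeas ρ]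
        fun a => (x : EuclideanSpace ℝ (Fin n) → ℝ) (φf t a) := by
    intro t x
    have hseq : ∀ k : ℕ, ∃ z : Lp ℝ 2 (Pmeas ρ),
        (∃ g : EuclideanSpace ℝ (Fin n) → ℝ, ContDiff ℝ 1 g ∧ HasCompactSupport g ∧
          (z : EuclideanSpace ℝ (Fin n) → ℝ) =ᵐ[Pmeas ρ] g) ∧ ‖x - z‖ ≤ 1/(k+1) :=
      fun k => aux_dense ρ hPprob x (by positivity)
    choose z hzD hzn using hseq
    have hb : ∀ k : ℕ, eLpNorm ((U t x : EuclideanSpace ℝ (Fin n) → ℝ)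
        - fun a => (x : EuclideanSpace ℝ (Fin n) → ℝ) (φf t a)) 2 (Pmeas ρ)
        ≤ ENNReal.ofReal ((‖U t‖ + 1) * (1/(k+1))) := by
      intro k
      obtain ⟨g, hg1, hgc, hzg⟩ := hzD k
      set q1 : EuclideanSpace ℝ (Fin n) → ℝ := (U t x : EuclideanSpace ℝ (Fin n) → ℝ)
        - (U t (z k) : EuclideanSpace ℝ (Fin n) → ℝ) with hq1
      set q2 : EuclideanSpace ℝ (Fin n) → ℝ := (U t (z k) : EuclideanSpace ℝ (Fin n) → ℝ)
        - fun a => (z k : EuclideanSpace ℝ (Fin n) → ℝ) (φf t a) with hq2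
      set q3 : EuclideanSpace ℝ (Fin n) → ℝ :=
        (fun a => (z k : EuclideanSpace ℝ (Fin n) → ℝ) (φf t a))
        - fun a => (x : EuclideanSpace ℝ (Fin n) → ℝ) (φf t a) with hq3
      have e1 : (U t (z k) : EuclideanSpace ℝ (Fin n) → ℝ) =ᵐ[Pmeas ρ]
          fun a => g (φf t a) := hUK (z k) g hg1 hgc hzg t
      have e2 : ((z k : EuclideanSpace ℝ (Fin n) → ℝ) ∘ (φf t)) =ᵐ[Pmeas ρ] (g ∘ (φf t)) :=
        (hMP t).quasiMeasurePreserving.ae_eq_comp hzg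
      have hA2 : eLpNorm q2 2 (Pmeas ρ) = 0 := by
        rw [hq2]
        have h0 : ((U t (z k) : EuclideanSpace ℝ (Fin n) → ℝ)
            - fun a => (z k : EuclideanSpace ℝ (Fin n) → ℝ) (φf t a)) =ᵐ[Pmeas ρ] 0 := by
          filter_upwards [e1, e2] with a h1 h2
          simp only [Pi.sub_apply, Pi.zero_apply, h1]
          have : (z k : EuclideanSpace ℝ (Fin n) → ℝ) (φf t a) = g (φf t a) := h2
          rw [this]
          ring
        rw [eLpNorm_congr_ae h0, eLpNorm_zero]
      have hA1 : eLpNorm q1 2 (Pmeas ρ) ≤ ENNReal.ofReal (‖U t‖ * (1/(k+1))) := by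
        rw [hq1]
        have hc : ((U t x - U t (z k) : Lp ℝ 2 (Pmeas ρ)) : EuclideanSpace ℝ (Fin n) → ℝ)
            =ᵐ[Pmeas ρ] (U t x : EuclideanSpace ℝ (Fin n) → ℝ)
              - (U t (z k) : EuclideanSpace ℝ (Fin n) → ℝ) := Lp.coeFn_sub _ _
        rw [← eLpNorm_congr_ae hc]
        have heq : eLpNorm ((U t x - U t (z k) : Lp ℝ 2 (Pmeas ρ)) :
            EuclideanSpace ℝ (Fin n) → ℝ) 2 (Pmeas ρ)
            = ENNReal.ofReal ‖U t x - U t (z k)‖ := by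
          rw [Lp.norm_def, ENNReal.ofReal_toReal (Lp.eLpNorm_ne_top _)]
        rw [heq]
        apply ENNReal.ofReal_le_ofReal
        calc ‖U t x - U t (z k)‖ = ‖U t (x - z k)‖ := by rw [map_sub]
          _ ≤ ‖U t‖ * ‖x - z k‖ := (U t).le_opNorm _
          _ ≤ ‖U t‖ * (1/(k+1)) := mul_le_mul_of_nonneg_left (hzn k) (norm_nonneg _)
      have hA3 : eLpNorm q3 2 (Pmeas ρ) ≤ ENNReal.ofReal (1/(k+1)) := by
        rw [hq3]
        have hcomp : ((fun a => (z k : EuclideanSpace ℝ (Fin n) → ℝ) (φf t a))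
            - fun a => (x : EuclideanSpace ℝ (Fin n) → ℝ) (φf t a))
            = ((z k : EuclideanSpace ℝ (Fin n) → ℝ)
              - (x : EuclideanSpace ℝ (Fin n) → ℝ)) ∘ (φf t) := rfl
        rw [hcomp, eLpNorm_comp_measurePreserving
          ((Lp.aestronglyMeasurable (z k)).sub (Lp.aestronglyMeasurable x)) (hMP t)]
        have hc : ((z k - x : Lp ℝ 2 (Pmeas ρ)) : EuclideanSpace ℝ (Fin n) → ℝ)
            =ᵐ[Pmeas ρ] (z k : EuclideanSpace ℝ (Fin n) → ℝ)
              - (x : EuclideanSpace ℝ (Fin n) → ℝ) := Lp.coeFn_sub _ _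
        rw [← eLpNorm_congr_ae hc]
        have heq : eLpNorm ((z k - x : Lp ℝ 2 (Pmeas ρ)) :
            EuclideanSpace ℝ (Fin n) → ℝ) 2 (Pmeas ρ) = ENNReal.ofReal ‖z k - x‖ := by
          rw [Lp.norm_def, ENNReal.ofReal_toReal (Lp.eLpNorm_ne_top _)]
        rw [heq]
        apply ENNReal.ofReal_le_ofReal
        rw [norm_sub_rev]
        exact hzn k
      have hm1 : AEStronglyMeasurable q1 (Pmeas ρ) :=
        (Lp.aestronglyMeasurable _).sub (Lp.aestronglyMeasurable _)
      have hmz : AEStronglyMeasurable (fun a =>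
          (z k : EuclideanSpace ℝ (Fin n) → ℝ) (φf t a)) (Pmeas ρ) :=
        (Lp.aestronglyMeasurable (z k)).comp_quasiMeasurePreserving
          (hMP t).quasiMeasurePreserving
      have hmx : AEStronglyMeasurable (fun a =>
          (x : EuclideanSpace ℝ (Fin n) → ℝ) (φf t a)) (Pmeas ρ) :=
        (Lp.aestronglyMeasurable x).comp_quasiMeasurePreserving
          (hMP t).quasiMeasurePreserving
      have hm2 : AEStronglyMeasurable q2 (Pmeas ρ) :=
        (Lp.aestronglyMeasurable _).sub hmz
      have hm3 : AEStronglyMeasurable q3 (Pmeas ρ) := hmz.sub hmx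
      have hsplit : ((U t x : EuclideanSpace ℝ (Fin n) → ℝ)
          - fun a => (x : EuclideanSpace ℝ (Fin n) → ℝ) (φf t a))
          = (q1 + q2) + q3 := by
        rw [hq1, hq2, hq3]
        funext a
        simp only [Pi.add_apply, Pi.sub_apply]
        ring
      rw [hsplit]
      calc eLpNorm ((q1 + q2) + q3) 2 (Pmeas ρ)
          ≤ eLpNorm (q1 + q2) 2 (Pmeas ρ) + eLpNorm q3 2 (Pmeas ρ) :=
            eLpNorm_add_le (hm1.add hm2) hm3 one_le_two
        _ ≤ (eLpNorm q1 2 (Pmeas ρ) + eLpNorm q2 2 (Pmeas ρ)) + eLpNorm q3 2 (Pmeas ρ) :=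
            add_le_add (eLpNorm_add_le hm1 hm2 one_le_two) le_rfl
        _ ≤ (ENNReal.ofReal (‖U t‖ * (1/(k+1))) + 0) + ENNReal.ofReal (1/(k+1)) :=
            add_le_add (add_le_add hA1 hA2.le) hA3
        _ = ENNReal.ofReal ((‖U t‖ + 1) * (1/(k+1))) := by
            rw [add_zero, ← ENNReal.ofReal_add (by positivity) (by positivity)]
            congr 1
            ring
    have hlim : Tendsto (fun k : ℕ => ENNReal.ofReal ((‖U t‖ + 1) * (1/(k+1)))) atTop
        (𝓝 0) := by
      rw [← ENNReal.ofReal_zero]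
      apply ENNReal.tendsto_ofReal
      have h0 : Tendsto (fun k : ℕ => 1/((k:ℝ)+1)) atTop (𝓝 0) :=
        tendsto_one_div_add_atTop_nhds_zero_nat
      have := h0.const_mul (‖U t‖ + 1)
      simpa only [mul_zero] using this
    have hzero : eLpNorm ((U t x : EuclideanSpace ℝ (Fin n) → ℝ)
        - fun a => (x : EuclideanSpace ℝ (Fin n) → ℝ) (φf t a)) 2 (Pmeas ρ) = 0 :=
      le_antisymm (ge_of_tendsto hlim (Filter.Eventually.of_forall hb)) (by simp)
    have hmx : AEStronglyMeasurable (fun a =>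
        (x : EuclideanSpace ℝ (Fin n) → ℝ) (φf t a)) (Pmeas ρ) :=
      (Lp.aestronglyMeasurable x).comp_quasiMeasurePreserving
        (hMP t).quasiMeasurePreserving
    rw [eLpNorm_eq_zero_iff ((Lp.aestronglyMeasurable _).sub hmx) (by norm_num)] at hzero
    filter_upwards [hzero] with a ha
    have ha' : (U t x : EuclideanSpace ℝ (Fin n) → ℝ) a
        - (x : EuclideanSpace ℝ (Fin n) → ℝ) (φf t a) = 0 := ha
    linarith
  -- isometry
  have claim1 : ∀ (t : ℝ) (x : Lp ℝ 2 (Pmeas ρ)), ‖U t x‖ = ‖x‖ := by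
    intro t x
    rw [Lp.norm_def, Lp.norm_def]
    congr 1
    calc eLpNorm (U t x : EuclideanSpace ℝ (Fin n) → ℝ) 2 (Pmeas ρ)
        = eLpNorm ((x : EuclideanSpace ℝ (Fin n) → ℝ) ∘ (φf t)) 2 (Pmeas ρ) :=
          eLpNorm_congr_ae (claim3 t x)
      _ = eLpNorm (x : EuclideanSpace ℝ (Fin n) → ℝ) 2 (Pmeas ρ) :=
          eLpNorm_comp_measurePreserving (Lp.aestronglyMeasurable x) (hMP t)
  exact ⟨claim1, claimB, claim3⟩

end
end

section
/- Non-stationary GLE uniqueness: let {U(t,s)}_{t,s∈ℝ} be a strongly continuous family of bounded operators on a complex Hilbert space H satisfying U(t,t) = 1 and the reversed composition law U(r,s)U(t,r) = U(t,s); let L(t)x := lim_{h→0} h⁻¹[U(t+h,t)x − x], fix t₀ ∈ ℝ and 0 ≠ z with z ∈ D(L(t)) for all t, such that t ↦ U(t,t₀)L(t)z is continuous. Define the time-dependent inner product (x,y)_t := (U(t,t₀)x, U(t,t₀)y) and the projection P(t)x := (x,z)_t (z,z)_t⁻¹ z, Q(t) = 1 − P(t). Then the system (d/dt) U(t,t₀)z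 = U(t,t₀)P(t)L(t)z + U(s,t₀)η_{ts} + ∫_s^t K(t,r) U(r,t₀)z dr together with K(t,s) = −(η_{ts}, η_{ss})_s (z,z)_s⁻¹ has a unique solution (K, η): for fixed t, K(t,·) is the unique continuous solution of the Volterra equation K(t,s) = −(U(t,s)Q(t)L(t)z, Q(s)L(s)z)_s (z,z)_s⁻¹ + ∫_s^t K(t,r)(U(r,s)z, Q(s)L(s)z)_s (z,z)_s⁻¹ dr, and η_{ts} = U(t,s)Q(t)L(t)z − ∫_s^t K(t,r) U(r,s)z dr. -/
open MeasureTheory Filter Topology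
open scoped InnerProductSpace

noncomputable section

open Set intervalIntegral Function

lemma abs_integral_abs_pow (s t : ℝ) (n : ℕ) :
    |∫ r in s..t, |r - t| ^ n| = |s - t| ^ (n + 1) / (n + 1) := by
  have h0 : (0:ℝ) ^ (n + 1) = 0 := zero_pow (Nat.succ_ne_zero n)
  rcases le_total s t with h | h
  · have hcg : EqOn (fun r => |r - t| ^ n) (fun r => (t - r) ^ n) (uIcc s t) := by
      intro r hr
      rw [uIcc_of_le h] at hr
      simp only []
      rw [abs_sub_comm, abs_of_nonneg (by linarith [hr.2])]
    rw [intervalIntegral.integral_congr hcg,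
      intervalIntegral.integral_comp_sub_left (fun x => x ^ n) t, integral_pow, sub_self,
      abs_sub_comm s t, abs_of_nonneg (by linarith : (0:ℝ) ≤ t - s), abs_div, h0, sub_zero,
      abs_of_nonneg (pow_nonneg (by linarith) _),
      abs_of_nonneg (by positivity : (0:ℝ) ≤ (n:ℝ) + 1)]
  · have hcg : EqOn (fun r => |r - t| ^ n) (fun r => (r - t) ^ n) (uIcc s t) := by
      intro r hr
      rw [uIcc_of_ge h] at hr
      simp only []
      rw [abs_of_nonneg (by linarith [hr.1])]
    rw [intervalIntegral.integral_congr hcg,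
      intervalIntegral.integral_comp_sub_right (fun x => x ^ n) t, integral_pow, sub_self,
      abs_of_nonneg (by linarith : (0:ℝ) ≤ s - t), abs_div, h0, zero_sub, abs_neg,
      abs_of_nonneg (pow_nonneg (by linarith) _),
      abs_of_nonneg (by positivity : (0:ℝ) ≤ (n:ℝ) + 1)]

lemma volterra_Icc (g : ℝ → ℂ) (k : ℝ → ℝ → ℂ) (hg : Continuous g)
    (hk : Continuous (uncurry k)) (t N : ℝ) (hN : 0 < N) :
    ∃! f : C(Icc (t - N) (t + N), ℂ),
      ∀ s : Icc (t - N) (t + N),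
        f s = g s + ∫ r in (s : ℝ)..t,
          IccExtend (by linarith : t - N ≤ t + N) f r * k r s := by
  have hab : t - N ≤ t + N := by linarith
  have htI : t ∈ Icc (t - N) (t + N) := ⟨by linarith, by linarith⟩
  obtain ⟨M₀, hM₀⟩ := (isCompact_Icc.prod isCompact_Icc).exists_bound_of_continuousOn
    (hk.continuousOn (s := Icc (t - N) (t + N) ×ˢ Icc (t - N) (t + N)))
  set M : ℝ := max M₀ 0 with hMdef
  have hM0 : 0 ≤ M := le_max_right _ _
  have hM : ∀ r ∈ Icc (t - N) (t + N), ∀ s ∈ Icc (t - N) (t + N), ‖k r s‖ ≤ M := by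
    intro r hr s hs
    exact le_trans (hM₀ (r, s) ⟨hr, hs⟩) (le_max_left _ _)
  haveI : Nonempty C(Icc (t - N) (t + N), ℂ) := ⟨ContinuousMap.const _ 0⟩
  set E : C(Icc (t - N) (t + N), ℂ) → ℝ → ℂ := fun f => IccExtend hab ⇑f with hEdef
  have hEc : ∀ f, Continuous (E f) := fun f => (map_continuous f).Icc_extend'
  have hTcont : ∀ f : C(Icc (t - N) (t + N), ℂ),
      Continuous fun s : Icc (t - N) (t + N) =>
        g s + ∫ r in (s : ℝ)..t, E f r * k r s := by
    intro f
    have h1 : Continuous fun x : ℝ => ∫ r in t..x, E f r * k r x := by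
      apply intervalIntegral.continuous_parametric_intervalIntegral_of_continuous
        (f := fun x r => E f r * k r x) _ continuous_id
      exact ((hEc f).comp continuous_snd).mul
        (hk.comp (continuous_snd.prodMk continuous_fst))
    have h2 : Continuous fun x : ℝ => g x + ∫ r in x..t, E f r * k r x := by
      have : (fun x : ℝ => g x + ∫ r in x..t, E f r * k r x)
          = fun x : ℝ => g x + -∫ r in t..x, E f r * k r x := by
        funext x
        rw [intervalIntegral.integral_symm]
      rw [this]
      exact hg.add h1.neg
    exact h2.comp continuous_subtype_val
  set T : C(Icc (t - N) (t + N), ℂ) → C(Icc (t - N) (t + N), ℂ) :=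
    fun f => ⟨fun s => g s + ∫ r in (s : ℝ)..t, E f r * k r s, hTcont f⟩ with hTdef
  have hTapp : ∀ f s, T f s = g s + ∫ r in (s : ℝ)..t, E f r * k r s := fun f s => rfl
  -- key iterate estimate
  have key : ∀ n : ℕ, ∀ f h : C(Icc (t - N) (t + N), ℂ), ∀ s : Icc (t - N) (t + N),
      ‖(T^[n] f) s - (T^[n] h) s‖ ≤ M ^ n * |(s : ℝ) - t| ^ n / (n.factorial) * dist f h := by
    intro n
    induction n with
    | zero =>
      intro f h s
      simpa [dist_eq_norm] using ContinuousMap.dist_apply_le_dist (f := f) (g := h) s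
    | succ n ih =>
      intro f h s
      rw [Function.iterate_succ_apply', Function.iterate_succ_apply']
      set F := T^[n] f with hF
      set G := T^[n] h with hG
      have hsub : uIcc (s : ℝ) t ⊆ Icc (t - N) (t + N) := uIcc_subset_Icc s.2 htI
      have hiF : IntervalIntegrable (fun r => E F r * k r s) volume (s : ℝ) t :=
        (((hEc F).mul (hk.comp (continuous_id.prodMk continuous_const)))).intervalIntegrable _ _
      have hiG : IntervalIntegrable (fun r => E G r * k r s) volume (s : ℝ) t :=
        (((hEc G).mul (hk.comp (continuous_id.prodMk continuous_const)))).intervalIntegrable _ _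
      have hTFG : T F s - T G s = ∫ r in (s : ℝ)..t, (E F r - E G r) * k r s := by
        rw [hTapp, hTapp, add_sub_add_left_eq_sub, ← intervalIntegral.integral_sub hiF hiG]
        apply intervalIntegral.integral_congr
        intro r _
        ring
      rw [hTFG]
      set C : ℝ := M ^ n / n.factorial * dist f h * M with hCdef
      have hC0 : 0 ≤ C := by positivity
      have hbound : ‖∫ r in (s : ℝ)..t, (E F r - E G r) * k r s‖
          ≤ |∫ r in (s : ℝ)..t, C * |r - t| ^ n| := by
        apply intervalIntegral.norm_integral_le_abs_of_norm_le
        · filter_upwards [MeasureTheory.self_mem_ae_restrict measurableSet_uIoc] with r hr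
          have hrI : r ∈ Icc (t - N) (t + N) := hsub (uIoc_subset_uIcc hr)
          have hE : E F r - E G r = F ⟨r, hrI⟩ - G ⟨r, hrI⟩ := by
            rw [hEdef]
            simp only [IccExtend_of_mem hab _ hrI]
          rw [norm_mul, hE]
          calc ‖F ⟨r, hrI⟩ - G ⟨r, hrI⟩‖ * ‖k r s‖
              ≤ (M ^ n * |r - t| ^ n / n.factorial * dist f h) * M := by
                apply mul_le_mul (ih f h ⟨r, hrI⟩) (hM r hrI s s.2) (norm_nonneg _)
                positivity
            _ = C * |r - t| ^ n := by rw [hCdef]; ring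
        · exact (continuous_const.mul
            (((continuous_id.sub continuous_const).abs).pow n)).intervalIntegrable _ _
      refine hbound.trans ?_
      rw [intervalIntegral.integral_const_mul, abs_mul, abs_of_nonneg hC0,
        abs_integral_abs_pow]
      rw [hCdef, Nat.factorial_succ]
      have : |(s : ℝ) - t| ^ (n + 1) / ((n : ℝ) + 1) = |(s : ℝ) - t| ^ (n + 1) / (n + 1 : ℕ) := by
        norm_num
      rw [this]
      rw [Nat.cast_mul, Nat.cast_add, Nat.cast_one]
      have hfac : (0:ℝ) < n.factorial := by positivity
      have hn1 : (0:ℝ) < (n:ℝ) + 1 := by positivity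
      rw [pow_succ]
      field_simp
      ring_nf
      exact le_rfl
  -- contraction for some iterate
  obtain ⟨n, hn⟩ : ∃ n : ℕ, (M * N) ^ n / n.factorial < 1 := by
    have h := FloorSemiring.tendsto_pow_div_factorial_atTop (K := ℝ) (M * N)
    exact (h.eventually (gt_mem_nhds one_pos)).exists
  set c : ℝ := (M * N) ^ n / n.factorial with hcdef
  have hc0 : 0 ≤ c := by positivity
  have hLip : LipschitzWith c.toNNReal T^[n] := by
    apply LipschitzWith.of_dist_le_mul
    intro f h
    rw [Real.coe_toNNReal c hc0, ContinuousMap.dist_le (by positivity)]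
    intro s
    rw [dist_eq_norm]
    refine (key n f h s).trans ?_
    have hsN : |(s : ℝ) - t| ≤ N := abs_le.mpr ⟨by linarith [s.2.1], by linarith [s.2.2]⟩
    rw [hcdef, mul_pow]
    gcongr
  have hcontr : ContractingWith c.toNNReal T^[n] := by
    constructor
    · rw [← NNReal.coe_lt_coe, Real.coe_toNNReal c hc0, NNReal.coe_one]
      exact hn
    · exact hLip
  set f₀ := hcontr.fixedPoint T^[n] with hf₀
  have hfix : Function.IsFixedPt T f₀ := hcontr.isFixedPt_fixedPoint_iterate
  refine ⟨f₀, ?_, ?_⟩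
  · intro s
    conv_lhs => rw [← hfix]
    exact hTapp f₀ s
  · intro f hf
    have hfT : Function.IsFixedPt T f := by
      ext s
      rw [hTapp]
      exact (hf s).symm
    have : Function.IsFixedPt T^[n] f := hfT.iterate n
    exact hcontr.fixedPoint_unique this

lemma volterra_exists (g : ℝ → ℂ) (k : ℝ → ℝ → ℂ) (hg : Continuous g)
    (hk : Continuous (uncurry k)) (t : ℝ) :
    ∃ K : ℝ → ℂ, Continuous K ∧ ∀ s, K s = g s + ∫ r in s..t, K r * k r s := by
  have hNpos : ∀ n : ℕ, (0:ℝ) < (n:ℝ) + 1 := fun n => by positivity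
  have hEx := fun n : ℕ => volterra_Icc g k hg hk t ((n:ℝ) + 1) (hNpos n)
  set sol : (n : ℕ) → C(Icc (t - ((n:ℝ)+1)) (t + ((n:ℝ)+1)), ℂ) :=
    fun n => (hEx n).choose with hsoldef
  have hsolP : ∀ n : ℕ, ∀ s : Icc (t - ((n:ℝ)+1)) (t + ((n:ℝ)+1)),
      sol n s = g s + ∫ r in (s : ℝ)..t,
        IccExtend (by linarith [hNpos n] : t - ((n:ℝ)+1) ≤ t + ((n:ℝ)+1)) (sol n) r * k r s :=
    fun n => (hEx n).choose_spec.1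
  have hsolU : ∀ n : ℕ, ∀ f : C(Icc (t - ((n:ℝ)+1)) (t + ((n:ℝ)+1)), ℂ),
      (∀ s : Icc (t - ((n:ℝ)+1)) (t + ((n:ℝ)+1)),
        f s = g s + ∫ r in (s : ℝ)..t,
          IccExtend (by linarith [hNpos n] : t - ((n:ℝ)+1) ≤ t + ((n:ℝ)+1)) f r * k r s) →
      f = sol n := fun n => (hEx n).choose_spec.2
  have hmem : ∀ (n : ℕ) (s : ℝ), |s - t| ≤ (n:ℝ) + 1 →
      s ∈ Icc (t - ((n:ℝ)+1)) (t + ((n:ℝ)+1)) := by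
    intro n s hs
    rw [abs_le] at hs
    exact ⟨by linarith [hs.1], by linarith [hs.2]⟩
  have htmem : ∀ n : ℕ, t ∈ Icc (t - ((n:ℝ)+1)) (t + ((n:ℝ)+1)) := by
    intro n
    exact hmem n t (by simp [le_of_lt (hNpos n)])
  -- consistency of solutions
  have agree : ∀ n m : ℕ, n ≤ m → ∀ (s : ℝ) (hs : s ∈ Icc (t - ((n:ℝ)+1)) (t + ((n:ℝ)+1)))
      (hs' : s ∈ Icc (t - ((m:ℝ)+1)) (t + ((m:ℝ)+1))), sol m ⟨s, hs'⟩ = sol n ⟨s, hs⟩ := by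
    intro n m hnm s hs hs'
    have hincl : ∀ x : ℝ, x ∈ Icc (t - ((n:ℝ)+1)) (t + ((n:ℝ)+1)) →
        x ∈ Icc (t - ((m:ℝ)+1)) (t + ((m:ℝ)+1)) := by
      intro x hx
      have : (n:ℝ) ≤ (m:ℝ) := Nat.cast_le.mpr hnm
      exact ⟨by linarith [hx.1], by linarith [hx.2]⟩
    set f : C(Icc (t - ((n:ℝ)+1)) (t + ((n:ℝ)+1)), ℂ) :=
      ⟨fun x => sol m ⟨(x : ℝ), hincl x x.2⟩,
        (map_continuous (sol m)).comp (continuous_subtype_val.subtype_mk _)⟩ with hfdef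
    have hfP : ∀ x : Icc (t - ((n:ℝ)+1)) (t + ((n:ℝ)+1)),
        f x = g x + ∫ r in (x : ℝ)..t,
          IccExtend (by linarith [hNpos n] : t - ((n:ℝ)+1) ≤ t + ((n:ℝ)+1)) f r * k r x := by
      intro x
      have h1 := hsolP m ⟨(x : ℝ), hincl x x.2⟩
      have h2 : f x = sol m ⟨(x : ℝ), hincl x x.2⟩ := rfl
      rw [h2, h1]
      congr 1
      apply intervalIntegral.integral_congr
      intro r hr
      have hrI : r ∈ Icc (t - ((n:ℝ)+1)) (t + ((n:ℝ)+1)) :=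
        uIcc_subset_Icc x.2 (htmem n) hr
      simp only []
      rw [IccExtend_of_mem _ _ hrI, IccExtend_of_mem _ _ (hincl r hrI)]
      rfl
    have := hsolU n f hfP
    rw [← this]
    rfl
  -- the global solution
  have hceil : ∀ s : ℝ, |s - t| ≤ (⌈|s - t|⌉₊ : ℝ) + 1 :=
    fun s => le_trans (Nat.le_ceil _) (by linarith)
  set K : ℝ → ℂ := fun s => sol ⌈|s - t|⌉₊ ⟨s, hmem _ s (hceil s)⟩ with hKdef
  have hKs : ∀ (n : ℕ) (s : ℝ) (hs : s ∈ Icc (t - ((n:ℝ)+1)) (t + ((n:ℝ)+1))),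
      K s = sol n ⟨s, hs⟩ := by
    intro n s hs
    rcases le_total n ⌈|s - t|⌉₊ with h | h
    · exact agree n _ h s hs _
    · exact (agree _ n h s _ hs).symm
  refine ⟨K, ?_, ?_⟩
  · rw [continuous_iff_continuousAt]
    intro s₀
    set n := ⌈|s₀ - t|⌉₊ with hn
    have hO : IsOpen {s : ℝ | |s - t| < (n:ℝ) + 1} :=
      isOpen_lt (by fun_prop) continuous_const
    have hs₀O : s₀ ∈ {s : ℝ | |s - t| < (n:ℝ) + 1} := by
      have := Nat.le_ceil |s₀ - t|
      simp only [Set.mem_setOf_eq]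
      linarith
    have heq : ∀ s ∈ {s : ℝ | |s - t| < (n:ℝ) + 1},
        K s = IccExtend (by linarith [hNpos n] : t - ((n:ℝ)+1) ≤ t + ((n:ℝ)+1)) (sol n) s := by
      intro s hs
      have hsI := hmem n s (le_of_lt hs)
      rw [hKs n s hsI, IccExtend_of_mem _ _ hsI]
    have hcE : Continuous (IccExtend
        (by linarith [hNpos n] : t - ((n:ℝ)+1) ≤ t + ((n:ℝ)+1)) (sol n)) :=
      (map_continuous (sol n)).Icc_extend'
    exact hcE.continuousAt.congr
      (Filter.eventuallyEq_of_mem (hO.mem_nhds hs₀O) heq).symm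
  · intro s
    set n := ⌈|s - t|⌉₊ with hn
    have hsI := hmem n s (hceil s)
    rw [hKs n s hsI, hsolP n ⟨s, hsI⟩]
    congr 1
    apply intervalIntegral.integral_congr
    intro r hr
    have hrI : r ∈ Icc (t - ((n:ℝ)+1)) (t + ((n:ℝ)+1)) :=
      uIcc_subset_Icc hsI (htmem n) hr
    simp only []
    rw [IccExtend_of_mem _ _ hrI, hKs n r hrI]


variable {H : Type} [NormedAddCommGroup H] [InnerProductSpace ℂ H] [CompleteSpace H]


variable {H : Type} [NormedAddCommGroup H] [InnerProductSpace ℂ H] [CompleteSpace H]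

/-- The time-dependent Mori projection `P(t) x = (x,z)_t (z,z)_t⁻¹ z`, where
`(x,y)_t = (U(t,t₀)x, U(t,t₀)y)` (conjugate-linear in the second slot, i.e.
`⟪U(t,t₀)y, U(t,t₀)x⟫` in Mathlib's convention). -/
def nsP (U : ℝ → ℝ → H →L[ℂ] H) (t₀ : ℝ) (z : H) (t : ℝ) (x : H) : H :=
  (⟪U t t₀ z, U t t₀ x⟫_ℂ / ⟪U t t₀ z, U t t₀ z⟫_ℂ) • z

def nsQ (U : ℝ → ℝ → H →L[ℂ] H) (t₀ : ℝ) (z : H) (t : ℝ) (x : H) : H :=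
  x - nsP U t₀ z t x

/-- existence and uniqueness for the non-stationary GLE with the
non-stationary 2FDT, for a two-parameter evolution family with reversed composition
law; K(t,·) is the unique continuous solution of a linear Volterra equation and η is
given by the explicit formula. -/
theorem nonstationary_gle_uniqueness
    (U : ℝ → ℝ → H →L[ℂ] H)
    (hid : ∀ t : ℝ, U t t = 1)
    (hcomp : ∀ r s t : ℝ, (U r s).comp (U t r) = U t s)
    (hcont : ∀ x : H, Continuous fun p : ℝ × ℝ => U p.1 p.2 x)
    (t₀ : ℝ) (z : H) (hz0 : z ≠ 0)
    (Lz : ℝ → H)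
    (hLz : ∀ t : ℝ, Tendsto (fun h : ℝ => (h : ℂ)⁻¹ • (U (t + h) t z - z))
      (𝓝[≠] 0) (𝓝 (Lz t)))
    (hLzc : Continuous fun t => U t t₀ (Lz t)) :
    (∃ (K : ℝ → ℝ → ℂ) (η : ℝ → ℝ → H),
      (∀ t : ℝ, Continuous (K t)) ∧
      (∀ t s : ℝ, HasDerivAt (fun r => U r t₀ z)
        (U t t₀ (nsP U t₀ z t (Lz t)) + U s t₀ (η t s)
          + ∫ r in s..t, K t r • U r t₀ z) t) ∧
      (∀ t s : ℝ, K t s =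
        -(⟪U s t₀ (η s s), U s t₀ (η t s)⟫_ℂ / ⟪U s t₀ z, U s t₀ z⟫_ℂ))) ∧
    (∀ (K : ℝ → ℝ → ℂ) (η : ℝ → ℝ → H),
      (∀ t : ℝ, Continuous (K t)) →
      (∀ t s : ℝ, HasDerivAt (fun r => U r t₀ z)
        (U t t₀ (nsP U t₀ z t (Lz t)) + U s t₀ (η t s)
          + ∫ r in s..t, K t r • U r t₀ z) t) →
      (∀ t s : ℝ, K t s =
        -(⟪U s t₀ (η s s), U s t₀ (η t s)⟫_ℂ / ⟪U s t₀ z, U s t₀ z⟫_ℂ)) →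
      (∀ t s : ℝ, K t s =
        -(⟪U s t₀ (nsQ U t₀ z s (Lz s)), U s t₀ (U t s (nsQ U t₀ z t (Lz t)))⟫_ℂ
            / ⟪U s t₀ z, U s t₀ z⟫_ℂ)
          + ∫ r in s..t, K t r *
              (⟪U s t₀ (nsQ U t₀ z s (Lz s)), U s t₀ (U r s z)⟫_ℂ
                / ⟪U s t₀ z, U s t₀ z⟫_ℂ)) ∧
      (∀ t s : ℝ,
        η t s = U t s (nsQ U t₀ z t (Lz t)) - ∫ r in s..t, K t r • U r s z)) := by
  -- basic algebra of the evolution family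
  have hU : ∀ a b c : ℝ, ∀ x : H, U b c (U a b x) = U a c x := by
    intro a b c x
    have := congrArg (fun L : H →L[ℂ] H => L x) (hcomp b c a)
    simpa using this
  have hid' : ∀ t : ℝ, ∀ x : H, U t t x = x := by
    intro t x; rw [hid]; rfl
  have hinj : ∀ s : ℝ, ∀ x y : H, U s t₀ x = U s t₀ y → x = y := by
    intro s x y h
    have := congrArg (U t₀ s) h
    rwa [hU s t₀ s x, hU s t₀ s y, hid' s x, hid' s y] at this
  have hbz' : ∀ p : ℝ, Continuous fun r => U r p z :=
    fun p => (hcont z).comp (continuous_id.prodMk continuous_const)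
  have hcz : ∀ s : ℝ, ⟪U s t₀ z, U s t₀ z⟫_ℂ ≠ 0 := by
    intro s
    rw [ne_eq, inner_self_eq_zero]
    intro h0
    apply hz0
    have := congrArg (U t₀ s) h0
    rwa [hU s t₀ s z, hid' s z, map_zero] at this
  -- the derivative of the flow
  have hF : ∀ t : ℝ, HasDerivAt (fun r => U r t₀ z) (U t t₀ (Lz t)) t := by
    intro t
    have h1 : HasDerivAt (fun r => U r t z) (Lz t) t := by
      rw [hasDerivAt_iff_tendsto_slope]
      have hmap : Tendsto (fun r : ℝ => r - t) (𝓝[≠] t) (𝓝[≠] (0:ℝ)) := by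
        apply tendsto_nhdsWithin_of_tendsto_nhds_of_eventually_within
        · have : Tendsto (fun r : ℝ => r - t) (𝓝 t) (𝓝 0) := by
            have := (continuous_id.sub (continuous_const (y := t))).tendsto t
            simpa [Pi.sub_def] using this
          exact this.mono_left nhdsWithin_le_nhds
        · filter_upwards [self_mem_nhdsWithin] with r hr
          exact sub_ne_zero.mpr hr
      have h2 := (hLz t).comp hmap
      apply h2.congr
      intro r
      show ((r - t : ℝ) : ℂ)⁻¹ • (U (t + (r - t)) t z - z) = slope (fun r => U r t z) t r
      rw [slope_def_module]
      rw [add_sub_cancel]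
      rw [hid' t z]
      rw [← Complex.ofReal_inv, Complex.coe_smul]
    have h2 := ((U t t₀).restrictScalars ℝ).hasFDerivAt.comp_hasDerivAt t h1
    simpa [Function.comp_def, hU] using h2
  -- mapping integrals
  have hmapint : ∀ (Kf : ℝ → ℂ), Continuous Kf → ∀ (p q s t : ℝ),
      U p q (∫ r in s..t, Kf r • U r p z) = ∫ r in s..t, Kf r • U r q z := by
    intro Kf hKf p q s t
    rw [← ContinuousLinearMap.intervalIntegral_comp_comm (f := fun r => Kf r • U r p z) _
      ((hKf.smul (hbz' p)).intervalIntegrable s t)]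
    apply intervalIntegral.integral_congr
    intro r _
    show U p q (Kf r • U r p z) = Kf r • U r q z
    rw [ContinuousLinearMap.map_smul, hU r p q z]
  -- scalar algebra
  have scalg : ∀ (Kf : ℝ → ℂ), Continuous Kf → ∀ (as vt : H) (cs : ℂ) (s t : ℝ),
      -(⟪as, vt - ∫ r in s..t, Kf r • U r t₀ z⟫_ℂ / cs)
        = -(⟪as, vt⟫_ℂ / cs) + ∫ r in s..t, Kf r * (⟪as, U r t₀ z⟫_ℂ / cs) := by
    intro Kf hKf as vt cs s t
    have hib : IntervalIntegrable (fun r => Kf r • U r t₀ z) volume s t :=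
      (hKf.smul (hbz' t₀)).intervalIntegrable s t
    have h1 : ⟪as, ∫ r in s..t, Kf r • U r t₀ z⟫_ℂ
        = ∫ r in s..t, Kf r * ⟪as, U r t₀ z⟫_ℂ := by
      show (innerSL ℂ as) (∫ r in s..t, Kf r • U r t₀ z) = _
      rw [← (innerSL ℂ as).intervalIntegral_comp_comm hib]
      apply intervalIntegral.integral_congr
      intro r _
      show ⟪as, Kf r • U r t₀ z⟫_ℂ = Kf r * ⟪as, U r t₀ z⟫_ℂ
      exact inner_smul_right _ _ _
    have h2 : ∫ r in s..t, Kf r * (⟪as, U r t₀ z⟫_ℂ / cs)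
        = (∫ r in s..t, Kf r * ⟪as, U r t₀ z⟫_ℂ) / cs := by
      rw [← intervalIntegral.integral_div]
      apply intervalIntegral.integral_congr
      intro r _
      ring
    rw [inner_sub_right, h1, h2]
    ring
  -- continuity of the fluctuating observable
  have hQmap : ∀ (s : ℝ) (x : H), U s t₀ (nsQ U t₀ z s x)
      = U s t₀ x - (⟪U s t₀ z, U s t₀ x⟫_ℂ / ⟪U s t₀ z, U s t₀ z⟫_ℂ) • U s t₀ z := by
    intro s x
    rw [nsQ, nsP, map_sub, ContinuousLinearMap.map_smul]
  have haC : Continuous fun s => U s t₀ (nsQ U t₀ z s (Lz s)) := by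
    simp only [hQmap]
    apply Continuous.sub hLzc
    apply Continuous.smul _ (hbz' t₀)
    exact Continuous.div (Continuous.inner (hbz' t₀) hLzc)
      (Continuous.inner (hbz' t₀) (hbz' t₀)) hcz
  -- ================= existence =================
  have hVex : ∀ t : ℝ, ∃ K : ℝ → ℂ, Continuous K ∧ ∀ s : ℝ, K s =
      (-(⟪U s t₀ (nsQ U t₀ z s (Lz s)), U t t₀ (nsQ U t₀ z t (Lz t))⟫_ℂ
          / ⟪U s t₀ z, U s t₀ z⟫_ℂ))
        + ∫ r in s..t, K r *
            (⟪U s t₀ (nsQ U t₀ z s (Lz s)), U r t₀ z⟫_ℂ / ⟪U s t₀ z, U s t₀ z⟫_ℂ) := by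
    intro t
    apply volterra_exists
      (fun s => -(⟪U s t₀ (nsQ U t₀ z s (Lz s)), U t t₀ (nsQ U t₀ z t (Lz t))⟫_ℂ
        / ⟪U s t₀ z, U s t₀ z⟫_ℂ))
      (fun r s => ⟪U s t₀ (nsQ U t₀ z s (Lz s)), U r t₀ z⟫_ℂ / ⟪U s t₀ z, U s t₀ z⟫_ℂ)
    · exact (Continuous.div (Continuous.inner haC continuous_const)
        (Continuous.inner (hbz' t₀) (hbz' t₀)) hcz).neg
    · apply Continuous.div
      · exact Continuous.inner (haC.comp continuous_snd) ((hbz' t₀).comp continuous_fst)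
      · exact Continuous.inner ((hbz' t₀).comp continuous_snd) ((hbz' t₀).comp continuous_snd)
      · exact fun p => hcz p.2
  choose K hKc hKeq using hVex
  have existence : ∃ (K : ℝ → ℝ → ℂ) (η : ℝ → ℝ → H),
      (∀ t : ℝ, Continuous (K t)) ∧
      (∀ t s : ℝ, HasDerivAt (fun r => U r t₀ z)
        (U t t₀ (nsP U t₀ z t (Lz t)) + U s t₀ (η t s)
          + ∫ r in s..t, K t r • U r t₀ z) t) ∧
      (∀ t s : ℝ, K t s =
        -(⟪U s t₀ (η s s), U s t₀ (η t s)⟫_ℂ / ⟪U s t₀ z, U s t₀ z⟫_ℂ)) := by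
    have hUη : ∀ t s : ℝ,
        U s t₀ (U t s (nsQ U t₀ z t (Lz t)) - ∫ r in s..t, K t r • U r s z)
          = U t t₀ (nsQ U t₀ z t (Lz t)) - ∫ r in s..t, K t r • U r t₀ z := by
      intro t s
      rw [map_sub, hU t s t₀, hmapint (K t) (hKc t) s t₀ s t]
    refine ⟨K, fun t s => U t s (nsQ U t₀ z t (Lz t)) - ∫ r in s..t, K t r • U r s z,
      hKc, ?_, ?_⟩
    · -- GLE
      intro t s
      beta_reduce
      have heq : U t t₀ (nsP U t₀ z t (Lz t))
          + U s t₀ (U t s (nsQ U t₀ z t (Lz t)) - ∫ r in s..t, K t r • U r s z)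
          + (∫ r in s..t, K t r • U r t₀ z) = U t t₀ (Lz t) := by
        rw [hUη t s]
        have hPQ : nsP U t₀ z t (Lz t) + nsQ U t₀ z t (Lz t) = Lz t := by
          rw [nsQ]; abel
        have h4 : U t t₀ (nsP U t₀ z t (Lz t))
            + (U t t₀ (nsQ U t₀ z t (Lz t)) - ∫ r in s..t, K t r • U r t₀ z)
            + (∫ r in s..t, K t r • U r t₀ z)
            = U t t₀ (nsP U t₀ z t (Lz t)) + U t t₀ (nsQ U t₀ z t (Lz t)) := by
          abel
        rw [h4, ← map_add, hPQ]
      rw [heq]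
      exact hF t
    · -- 2FDT
      intro t s
      beta_reduce
      have hηss : U s t₀ (U s s (nsQ U t₀ z s (Lz s)) - ∫ r in s..s, K s r • U r s z)
          = U s t₀ (nsQ U t₀ z s (Lz s)) := by
        rw [intervalIntegral.integral_same, sub_zero, hid']
      rw [hηss, hUη t s, scalg (K t) (hKc t) _ _ _ s t]
      exact hKeq t s
  -- ================= uniqueness =================
  have uniqueness : ∀ (K : ℝ → ℝ → ℂ) (η : ℝ → ℝ → H),
      (∀ t : ℝ, Continuous (K t)) →
      (∀ t s : ℝ, HasDerivAt (fun r => U r t₀ z)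
        (U t t₀ (nsP U t₀ z t (Lz t)) + U s t₀ (η t s)
          + ∫ r in s..t, K t r • U r t₀ z) t) →
      (∀ t s : ℝ, K t s =
        -(⟪U s t₀ (η s s), U s t₀ (η t s)⟫_ℂ / ⟪U s t₀ z, U s t₀ z⟫_ℂ)) →
      (∀ t s : ℝ, K t s =
        -(⟪U s t₀ (nsQ U t₀ z s (Lz s)), U s t₀ (U t s (nsQ U t₀ z t (Lz t)))⟫_ℂ
            / ⟪U s t₀ z, U s t₀ z⟫_ℂ)
          + ∫ r in s..t, K t r *
              (⟪U s t₀ (nsQ U t₀ z s (Lz s)), U s t₀ (U r s z)⟫_ℂ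
                / ⟪U s t₀ z, U s t₀ z⟫_ℂ)) ∧
      (∀ t s : ℝ,
        η t s = U t s (nsQ U t₀ z t (Lz t)) - ∫ r in s..t, K t r • U r s z) := by
    intro K' η hKc' hGLE h2FDT
    have hUη : ∀ t s : ℝ, U s t₀ (η t s)
        = U t t₀ (nsQ U t₀ z t (Lz t)) - ∫ r in s..t, K' t r • U r t₀ z := by
      intro t s
      have h1 := (hGLE t s).unique (hF t)
      have h2 : U s t₀ (η t s) = U t t₀ (Lz t) - U t t₀ (nsP U t₀ z t (Lz t))
          - ∫ r in s..t, K' t r • U r t₀ z := by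
        rw [← h1]; abel
      rw [h2, ← map_sub]
      rfl
    constructor
    · intro t s
      have h1 := h2FDT t s
      have hηss : U s t₀ (η s s) = U s t₀ (nsQ U t₀ z s (Lz s)) := by
        rw [hUη s s, intervalIntegral.integral_same, sub_zero]
      rw [hηss, hUη t s, scalg (K' t) (hKc' t) _ _ _ s t] at h1
      simp only [hU]
      exact h1
    · intro t s
      apply hinj s
      rw [hUη t s, map_sub, hU t s t₀, hmapint (K' t) (hKc' t) s t₀ s t]
  exact ⟨existence, uniqueness⟩

end
end
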